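/- Let h ∈ ℂ[X,Y] with ∂h/∂Y ≠ 0, and let S be a segment of the right Newton polygon of h that does not touch the horizontal axis (i.e. every point of S has ordinate ≥ 1). Then T = S − (0,1) is a segment of the right Newton polygon of ∂h/∂Y, and in(∂h/∂Y, T) = ∂/∂Y in(h, S). -/

import Mathlib

open scoped Classical

noncomputable section

/-- A (candidate) segment in the plane, given by its two lattice endpoints. -/
structure Seg where
  P : ℕ × ℕ
  Q : ℕ × ℕ

/-- the support of a polynomial in two variables, as a finite set of pairs `(α,β)`. -/
def supp (h : MvPolynomial (Fin 2) ℂ) : Finset (ℕ × ℕ) :=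
  h.support.image fun d => (d 0, d 1)

/-- the coefficient `h_{αβ}` of `X^α Y^β` in `h`. -/
def coeff2 (h : MvPolynomial (Fin 2) ℂ) (p : ℕ × ℕ) : ℂ :=
  MvPolynomial.coeff (Finsupp.single 0 p.1 + Finsupp.single 1 p.2) h

/-- the linear functional whose level lines are parallel to `S`, normalized so that
(for a right-polygon segment, `S.P.2 < S.Q.2`) its gradient points to the right. -/
def lfun (S : Seg) (v : ℕ × ℕ) : ℤ :=
  ((S.Q.2 : ℤ) - S.P.2) * v.1 - ((S.Q.1 : ℤ) - S.P.1) * v.2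

/-- the linear functional whose level lines are parallel to `S`, normalized so that
(for a top-polygon segment, `S.P.1 < S.Q.1`) its gradient points upwards. -/
def gfun (S : Seg) (v : ℕ × ℕ) : ℤ :=
  ((S.Q.1 : ℤ) - S.P.1) * v.2 - ((S.Q.2 : ℤ) - S.P.2) * v.1

/-- `v` lies on the segment with endpoints `S.P` and `S.Q`
(collinear and inside the bounding box). -/
def OnSeg (S : Seg) (v : ℕ × ℕ) : Prop :=
  lfun S v = lfun S S.P ∧
  min S.P.1 S.Q.1 ≤ v.1 ∧ v.1 ≤ max S.P.1 S.Q.1 ∧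
  min S.P.2 S.Q.2 ≤ v.2 ∧ v.2 ≤ max S.P.2 S.Q.2

/-- `S` is a segment (one-dimensional boundary face) of the right Newton polygon of `h`:
its endpoints (ordered by increasing ordinate) are in the support, the whole support lies
weakly to the left of the line through `S` (the supporting line has outward normal with
positive first coordinate), and `S` is a maximal face: every support point on this line has
ordinate between those of the endpoints. Such segments are exactly the boundary faces on
the right of the Newton diagram joining the lines `β = ord_Y h` and `β = deg_Y h`. -/
def RightSeg (h : MvPolynomial (Fin 2) ℂ) (S : Seg) : Prop :=
  S.P ∈ supp h ∧ S.Q ∈ supp h ∧ S.P.2 < S.Q.2 ∧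
  (∀ v ∈ supp h, lfun S v ≤ lfun S S.P) ∧
  (∀ v ∈ supp h, lfun S v = lfun S S.P → S.P.2 ≤ v.2 ∧ v.2 ≤ S.Q.2)

/-- `S` is a segment of the top Newton polygon of `h` (endpoints ordered by increasing
abscissa; the supporting line has outward normal with positive second coordinate). -/
def TopSeg (h : MvPolynomial (Fin 2) ℂ) (S : Seg) : Prop :=
  S.P ∈ supp h ∧ S.Q ∈ supp h ∧ S.P.1 < S.Q.1 ∧
  (∀ v ∈ supp h, gfun S v ≤ gfun S S.P) ∧
  (∀ v ∈ supp h, gfun S v = gfun S S.P → S.P.1 ≤ v.1 ∧ v.1 ≤ S.Q.1)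

/-- `σ(S)` for a right-polygon segment (endpoints ordered by increasing ordinate):
`0` if `S` is vertical, otherwise minus the sign of the slope of `S`. -/
def sigmaR (S : Seg) : ℤ :=
  if S.P.1 = S.Q.1 then 0 else if S.P.1 < S.Q.1 then -1 else 1

/-- `σ(S)` for a top-polygon segment (endpoints ordered by increasing abscissa). -/
def sigmaT (S : Seg) : ℤ :=
  if S.P.2 = S.Q.2 then 0 else if S.P.2 < S.Q.2 then -1 else 1

/-- `|S₁|`, the length of the projection of `S` on the horizontal axis. -/
def len1 (S : Seg) : ℚ := |(S.Q.1 : ℚ) - S.P.1|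

/-- `|S₂|`, the length of the projection of `S` on the vertical axis. -/
def len2 (S : Seg) : ℚ := |(S.Q.2 : ℚ) - S.P.2|

/-- the declivity `(|S₁|/|S₂|)·σ(S)` of a right-polygon segment. -/
def decl (S : Seg) : ℚ := len1 S / len2 S * (sigmaR S : ℚ)

/-- the declivity `(|S₂|/|S₁|)·σ(S)` of a top-polygon segment. -/
def tdecl (S : Seg) : ℚ := len2 S / len1 S * (sigmaT S : ℚ)

/-- `α(S)`: the abscissa of the intersection of the line through `S` with the
horizontal axis. -/
def alphaS (S : Seg) : ℚ := (S.P.1 : ℚ) + (S.P.2 : ℚ) * decl S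

/-- `β(S)`: the ordinate of the intersection of the line through `S` with the
vertical axis. -/
def betaS (S : Seg) : ℚ := (S.P.2 : ℚ) + (S.P.1 : ℚ) * tdecl S

/-- a right-polygon segment is exceptional if it joins the horizontal axis with a
point of the form `(p, 1)`. -/
def RExcep (S : Seg) : Prop := S.P.2 = 0 ∧ S.Q.2 = 1

/-- a top-polygon segment is exceptional if it joins the vertical axis with a
point of the form `(1, q)`. -/
def TExcep (S : Seg) : Prop := S.P.1 = 0 ∧ S.Q.1 = 1

/-- `in(h,S)`: the sum of the monomials of `h` supported on the segment `S`. -/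
def inPoly (h : MvPolynomial (Fin 2) ℂ) (S : Seg) : MvPolynomial (Fin 2) ℂ :=
  ∑ p ∈ (supp h).filter (OnSeg S),
    MvPolynomial.monomial (Finsupp.single 0 p.1 + Finsupp.single 1 p.2) (coeff2 h p)

namespace Stmt16Aux

/-- encode a pair as an exponent vector. -/
def e (p : ℕ × ℕ) : Fin 2 →₀ ℕ := Finsupp.single 0 p.1 + Finsupp.single 1 p.2

lemma e_apply0 (p : ℕ × ℕ) : e p 0 = p.1 := by
  simp [e, Finsupp.single_apply]

lemma e_apply1 (p : ℕ × ℕ) : e p 1 = p.2 := by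
  simp [e, Finsupp.single_apply]

lemma e_eq (d : Fin 2 →₀ ℕ) : e (d 0, d 1) = d := by
  ext j
  fin_cases j <;> simp [e, Finsupp.single_apply]

lemma e_inj {p q : ℕ × ℕ} (hpq : e p = e q) : p = q := by
  have h0 : e p 0 = e q 0 := by rw [hpq]
  have h1 : e p 1 = e q 1 := by rw [hpq]
  rw [e_apply0, e_apply0] at h0
  rw [e_apply1, e_apply1] at h1
  exact Prod.ext h0 h1

lemma coeff2_eq (h : MvPolynomial (Fin 2) ℂ) (p : ℕ × ℕ) :
    coeff2 h p = MvPolynomial.coeff (e p) h := rfl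

lemma mem_supp {h : MvPolynomial (Fin 2) ℂ} {p : ℕ × ℕ} :
    p ∈ supp h ↔ coeff2 h p ≠ 0 := by
  rw [coeff2_eq]
  unfold supp
  rw [Finset.mem_image]
  constructor
  · rintro ⟨d, hd, rfl⟩
    rw [e_eq]
    exact MvPolynomial.mem_support_iff.mp hd
  · intro hc
    exact ⟨e p, MvPolynomial.mem_support_iff.mpr hc, by rw [e_apply0, e_apply1]⟩

lemma coeff_pderiv (i : Fin 2) (m : Fin 2 →₀ ℕ) (f : MvPolynomial (Fin 2) ℂ) :
    MvPolynomial.coeff m (MvPolynomial.pderiv i f) =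
      ((m i : ℂ) + 1) * MvPolynomial.coeff (m + Finsupp.single i 1) f := by
  induction f using MvPolynomial.induction_on' with
  | monomial d c =>
    rw [MvPolynomial.pderiv_monomial, MvPolynomial.coeff_monomial,
      MvPolynomial.coeff_monomial]
    by_cases hd : d = m + Finsupp.single i 1
    · subst hd
      rw [if_pos rfl, if_pos (add_tsub_cancel_right _ _)]
      simp [Finsupp.add_apply, mul_comm]
    · rw [if_neg hd]
      by_cases h0 : d i = 0
      · by_cases he : d - Finsupp.single i 1 = m <;> simp [he, h0]
      · have hne : d - Finsupp.single i 1 ≠ m := by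
          intro he
          apply hd
          have hle : Finsupp.single i 1 ≤ d := by
            rw [Finsupp.single_le_iff]
            omega
          rw [← he, tsub_add_cancel_of_le hle]
        simp [hne]
  | add f g hf hg =>
    rw [map_add, MvPolynomial.coeff_add, MvPolynomial.coeff_add, hf, hg]
    ring

lemma e_succ (p : ℕ × ℕ) : e p + Finsupp.single 1 1 = e (p.1, p.2 + 1) := by
  simp [e, Finsupp.single_add, add_assoc]

lemma coeff2_pderiv (f : MvPolynomial (Fin 2) ℂ) (p : ℕ × ℕ) :
    coeff2 (MvPolynomial.pderiv (1 : Fin 2) f) p = ((p.2 : ℂ) + 1) * coeff2 f (p.1, p.2 + 1) := by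
  rw [coeff2_eq, coeff2_eq, coeff_pderiv, e_apply1, e_succ]

lemma supp_pderiv {f : MvPolynomial (Fin 2) ℂ} {p : ℕ × ℕ} :
    p ∈ supp (MvPolynomial.pderiv (1 : Fin 2) f) ↔ (p.1, p.2 + 1) ∈ supp f := by
  rw [mem_supp, mem_supp, coeff2_pderiv, mul_ne_zero_iff]
  have hne : ((p.2 : ℂ) + 1) ≠ 0 := by
    intro hcc
    exact_mod_cast hcc
  simp [hne]

lemma coeff2_inPoly (f : MvPolynomial (Fin 2) ℂ) (S : Seg) (p : ℕ × ℕ) :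
    coeff2 (inPoly f S) p =
      if p ∈ (supp f).filter (OnSeg S) then coeff2 f p else 0 := by
  rw [coeff2_eq]
  unfold inPoly
  rw [MvPolynomial.coeff_sum]
  have key : ∀ q : ℕ × ℕ,
      MvPolynomial.coeff (e p)
        (MvPolynomial.monomial (Finsupp.single 0 q.1 + Finsupp.single 1 q.2) (coeff2 f q))
      = if q = p then coeff2 f q else 0 := by
    intro q
    have : (Finsupp.single (0 : Fin 2) q.1 + Finsupp.single 1 q.2) = e q := rfl
    rw [this, MvPolynomial.coeff_monomial]
    congr 1
    simp only [eq_iff_iff]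
    exact ⟨e_inj, by rintro rfl; rfl⟩
  rw [Finset.sum_congr rfl fun q _ => key q, Finset.sum_ite_eq']

end Stmt16Aux

open Stmt16Aux in
/-- Standard segments of the right polygon of `∂h/∂Y` (Section 8): if `S` is a segment
of the right Newton polygon of `h` that does not touch the horizontal axis
(every point of `S` has ordinate ≥ 1), then `T = S − (0,1)` is a segment of the right
Newton polygon of `∂h/∂Y` and `in(∂h/∂Y, T) = ∂/∂Y in(h,S)` (equation (19)). -/
theorem stmt16 (h : MvPolynomial (Fin 2) ℂ)
    (hdy : MvPolynomial.pderiv (1 : Fin 2) h ≠ 0)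
    (S : Seg) (hS : RightSeg h S) (hax : 1 ≤ S.P.2) :
    RightSeg (MvPolynomial.pderiv (1 : Fin 2) h)
        ⟨(S.P.1, S.P.2 - 1), (S.Q.1, S.Q.2 - 1)⟩ ∧
    inPoly (MvPolynomial.pderiv (1 : Fin 2) h) ⟨(S.P.1, S.P.2 - 1), (S.Q.1, S.Q.2 - 1)⟩
      = MvPolynomial.pderiv (1 : Fin 2) (inPoly h S) := by
  obtain ⟨hP, hQ, hPQ, hmax, hfc⟩ := hS
  have hQ2 : 1 ≤ S.Q.2 := by omega
  have c1 : ((S.P.2 - 1 : ℕ) : ℤ) = (S.P.2 : ℤ) - 1 := by omega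
  have c2 : ((S.Q.2 - 1 : ℕ) : ℤ) = (S.Q.2 : ℤ) - 1 := by omega
  -- key arithmetic identity for the shifted linear functional
  have key : ∀ v : ℕ × ℕ,
      lfun ⟨(S.P.1, S.P.2 - 1), (S.Q.1, S.Q.2 - 1)⟩ v
        = lfun S (v.1, v.2 + 1) + ((S.Q.1 : ℤ) - S.P.1) := by
    intro v
    simp only [lfun]
    push_cast [c1, c2]
    ring
  have lS : ∀ v : ℕ × ℕ, lfun S v
      = ((S.Q.2 : ℤ) - S.P.2) * v.1 - ((S.Q.1 : ℤ) - S.P.1) * v.2 := fun _ => rfl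
  have keyP : lfun ⟨(S.P.1, S.P.2 - 1), (S.Q.1, S.Q.2 - 1)⟩ (S.P.1, S.P.2 - 1)
      = lfun S S.P + ((S.Q.1 : ℤ) - S.P.1) := by
    have hsp : S.P.2 - 1 + 1 = S.P.2 := by omega
    rw [key]
    simp [hsp]
  have hPmem : (S.P.1, S.P.2 - 1 + 1) ∈ supp h := by
    have hsp : S.P.2 - 1 + 1 = S.P.2 := by omega
    rw [hsp]
    exact hP
  have hQmem : (S.Q.1, S.Q.2 - 1 + 1) ∈ supp h := by
    have hsq : S.Q.2 - 1 + 1 = S.Q.2 := by omega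
    rw [hsq]
    exact hQ
  have hOn : ∀ p : ℕ × ℕ,
      OnSeg ⟨(S.P.1, S.P.2 - 1), (S.Q.1, S.Q.2 - 1)⟩ p ↔ OnSeg S (p.1, p.2 + 1) := by
    intro p
    unfold OnSeg
    constructor
    · rintro ⟨hl, h1, h2, h3, h4⟩
      rw [key, keyP] at hl
      simp only at h1 h2 h3 h4 ⊢
      refine ⟨by linarith, h1, h2, by omega, by omega⟩
    · rintro ⟨hl, h1, h2, h3, h4⟩
      rw [key, keyP]
      simp only at h1 h2 h3 h4 ⊢
      refine ⟨by linarith, h1, h2, by omega, by omega⟩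
  constructor
  · refine ⟨?_, ?_, ?_, ?_, ?_⟩
    · exact supp_pderiv.mpr hPmem
    · exact supp_pderiv.mpr hQmem
    · show S.P.2 - 1 < S.Q.2 - 1
      omega
    · intro v hv
      have hv' := hmax _ (supp_pderiv.mp hv)
      rw [key, keyP]
      linarith
    · intro v hv hl
      rw [key, keyP] at hl
      have hb := hfc _ (supp_pderiv.mp hv) (by linarith)
      simp only at hb
      constructor
      · show S.P.2 - 1 ≤ v.2
        omega
      · show v.2 ≤ S.Q.2 - 1
        omega
  · apply MvPolynomial.ext
    intro d
    rw [← e_eq d, ← coeff2_eq, ← coeff2_eq]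
    set p : ℕ × ℕ := (d 0, d 1) with hp
    rw [coeff2_inPoly (MvPolynomial.pderiv (1 : Fin 2) h), coeff2_pderiv (inPoly h S), coeff2_inPoly h, mul_ite, mul_zero]
    have hcond : p ∈ (supp (MvPolynomial.pderiv (1 : Fin 2) h)).filter
          (OnSeg ⟨(S.P.1, S.P.2 - 1), (S.Q.1, S.Q.2 - 1)⟩)
        ↔ (p.1, p.2 + 1) ∈ (supp h).filter (OnSeg S) := by
      simp only [Finset.mem_filter, supp_pderiv, hOn]
    by_cases hc : (p.1, p.2 + 1) ∈ (supp h).filter (OnSeg S)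
    · rw [if_pos hc, if_pos (hcond.mpr hc), coeff2_pderiv]
    · rw [if_neg hc, if_neg (fun hh => hc (hcond.mp hh))]
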